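/- Armijo backtracking terminates: if f : ℝ^n → ℝ is continuously differentiable, d is a descent direction at y (∇f(y)ᵀd < 0), ξ ∈ (0,1), and b ∈ (0,1), then there exists a nonnegative integer c such that f(y + b^c d) ≤ f(y) + b^c ξ ∇f(y)ᵀ d. -/

import Mathlib

/-- Armijo backtracking terminates: for a C¹ function `f`, a descent direction
`d` at `y`, and constants `ξ, b ∈ (0,1)`, some step `b^c` satisfies the Armijo
sufficient-decrease condition. -/
theorem armijo_backtracking_terminates
    (n : ℕ) (f : EuclideanSpace ℝ (Fin n) → ℝ) (hf : ContDiff ℝ 1 f)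
    (y d : EuclideanSpace ℝ (Fin n))
    (hdesc : (inner ℝ (gradient f y) d : ℝ) < 0)
    (ξ : ℝ) (hξ : ξ ∈ Set.Ioo (0 : ℝ) 1)
    (b : ℝ) (hb : b ∈ Set.Ioo (0 : ℝ) 1) :
    ∃ c : ℕ, f (y + b ^ c • d) ≤ f y + b ^ c * ξ * (inner ℝ (gradient f y) d : ℝ) := by
  set L : ℝ := (inner ℝ (gradient f y) d : ℝ) with hL
  have hdiff : DifferentiableAt ℝ f y := (hf.differentiable one_ne_zero) y
  have hgrad := hdiff.hasGradientAt
  have hfd : HasFDerivAt f ((InnerProductSpace.toDual ℝ _) (gradient f y)) y :=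
    hgrad.hasFDerivAt
  have hcomp : HasDerivAt (fun t : ℝ => f (y + t • d)) L 0 := by
    have hinner : HasDerivAt (fun t : ℝ => y + t • d) d 0 := by
      simpa using ((hasDerivAt_id (0:ℝ)).smul_const d).const_add y
    have hfd0 : HasFDerivAt f ((InnerProductSpace.toDual ℝ _) (gradient f y))
        (y + (0:ℝ) • d) := by simpa using hfd
    have := hfd0.comp_hasDerivAt (x := (0:ℝ)) hinner
    exact this
  have hslope : Filter.Tendsto (fun t : ℝ => (f (y + t • d) - f y) / t)
      (nhdsWithin 0 {(0:ℝ)}ᶜ) (nhds L) := by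
    have h := hasDerivAt_iff_tendsto_slope.mp hcomp
    simpa [slope_fun_def_field, Function.comp] using h
  have hLξ : L < ξ * L := by nlinarith [hξ.1, hξ.2, hdesc]
  have hev : ∀ᶠ t in nhdsWithin 0 {(0:ℝ)}ᶜ,
      (f (y + t • d) - f y) / t < ξ * L :=
    hslope.eventually (Filter.Tendsto.eventually_lt_const hLξ Filter.tendsto_id) |>.mono
      (fun t ht => ht)
  -- b^c tends to 0 within the punctured neighborhood
  have hbpos : ∀ c : ℕ, (0:ℝ) < b ^ c := fun c => pow_pos hb.1 c
  have htend : Filter.Tendsto (fun c : ℕ => b ^ c) Filter.atTop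
      (nhdsWithin 0 {(0:ℝ)}ᶜ) := by
    refine tendsto_nhdsWithin_of_tendsto_nhds_of_eventually_within _
      (tendsto_pow_atTop_nhds_zero_of_lt_one (le_of_lt hb.1) hb.2)
      (Filter.Eventually.of_forall (fun c => (hbpos c).ne'))
  obtain ⟨c, hc⟩ := (htend.eventually hev).exists
  refine ⟨c, ?_⟩
  have := (div_lt_iff₀ (hbpos c)).mp hc
  nlinarith [hbpos c]
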